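/- arXiv:2508.06766 — 2 statements merged into one kernel-verified Lean document; each statement's English description precedes it below -/
import Mathlib

section
/- Let F ∈ ℂ⟦X⟧ be the exponential generating function F = ∑_{n≥0} c_n^{(k)}(α,a) X^n/n! of the two-parameter Hurwitz-Lerch type poly-Cauchy numbers of the first kind. Then, for every k ∈ ℤ, the formal derivative of F satisfies (1 + X) · F′ = ∑_{n≥0} D_n^{(k)}(α,a) X^n/n!, where D_n^{(k)}(α,a) = ∑_{j=0}^{n} (-1)^{n-j} · [n j] · (α(j+1) + a)^{-k}. -/
open PowerSeries Finset

/-- Unsigned Stirling numbers of the first kind. -/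
def stirling1 : ℕ → ℕ → ℕ
  | 0, 0 => 1
  | 0, _ + 1 => 0
  | _ + 1, 0 => 0
  | n + 1, m + 1 => stirling1 n m + n * stirling1 n (m + 1)

/-- Stirling numbers of the second kind. -/
def stirling2 : ℕ → ℕ → ℕ
  | 0, 0 => 1
  | 0, _ + 1 => 0
  | _ + 1, 0 => 0
  | n + 1, m + 1 => stirling2 n m + (m + 1) * stirling2 n (m + 1)

/-- Two-parameter Hurwitz-Lerch type poly-Bernoulli numbers
    `B_n^{(k)}(α,a) = (-1)^n ∑_{m=0}^n (-1)^m m! {n m} (αm+a)^{-k}`. -/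
noncomputable def polyBernoulli (k : ℤ) (α a : ℂ) (n : ℕ) : ℂ :=
  (-1 : ℂ) ^ n * ∑ m ∈ Finset.range (n + 1),
    (-1 : ℂ) ^ m * (m.factorial : ℂ) * (stirling2 n m : ℂ) * (α * m + a) ^ (-k)

/-- Two-parameter Hurwitz-Lerch type poly-Cauchy numbers of the first kind
    `c_n^{(k)}(α,a) = (-1)^n ∑_{m=0}^n (-1)^m [n m] (αm+a)^{-k}`. -/
noncomputable def polyCauchy1 (k : ℤ) (α a : ℂ) (n : ℕ) : ℂ :=
  (-1 : ℂ) ^ n * ∑ m ∈ Finset.range (n + 1),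
    (-1 : ℂ) ^ m * (stirling1 n m : ℂ) * (α * m + a) ^ (-k)

/-- Two-parameter Hurwitz-Lerch type poly-Cauchy numbers of the second kind
    `ĉ_n^{(k)}(α,a) = (-1)^n ∑_{m=0}^n [n m] (αm+a)^{-k}`. -/
noncomputable def polyCauchy2 (k : ℤ) (α a : ℂ) (n : ℕ) : ℂ :=
  (-1 : ℂ) ^ n * ∑ m ∈ Finset.range (n + 1),
    (stirling1 n m : ℂ) * (α * m + a) ^ (-k)

/-- The formal power series `log(1+X) = ∑_{j≥1} (-1)^{j-1} X^j / j` in `ℂ⟦X⟧`. -/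
noncomputable def formalLog : PowerSeries ℂ :=
  PowerSeries.mk fun j => if j = 0 then 0 else (-1 : ℂ) ^ (j - 1) / j

lemma stirling1_eq_zero : ∀ {n m : ℕ}, n < m → stirling1 n m = 0 := by
  intro n
  induction n with
  | zero => intro m h; cases m with
    | zero => omega
    | succ m => rfl
  | succ n ih =>
    intro m h
    cases m with
    | zero => omega
    | succ m =>
      show stirling1 n m + n * stirling1 n (m+1) = 0
      rw [ih (by omega), ih (by omega)]
      simp

lemma n_mul_stirling1_zero (n : ℕ) : (n : ℂ) * (stirling1 n 0 : ℂ) = 0 := by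
  cases n with
  | zero => simp
  | succ n => show _ * ((0:ℕ):ℂ) = 0; simp

lemma key (k : ℤ) (α a : ℂ) (n : ℕ) :
    polyCauchy1 k α a (n+1) + (n : ℂ) * polyCauchy1 k α a n
      = ∑ j ∈ Finset.range (n + 1),
          (-1 : ℂ) ^ (n - j) * (stirling1 n j : ℂ) * (α * (j + 1) + a) ^ (-k) := by
  unfold polyCauchy1
  have hsum : ∑ m ∈ Finset.range (n + 2),
        (-1:ℂ)^m * (stirling1 (n+1) m : ℂ) * (α * m + a) ^ (-k)
      = ∑ m ∈ Finset.range (n + 1),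
          ((-1:ℂ)^(m+1) * (stirling1 n m : ℂ) * (α * (m+1 : ℕ) + a) ^ (-k)
            + (n:ℂ) * ((-1:ℂ)^(m+1) * (stirling1 n (m+1) : ℂ) * (α * (m+1 : ℕ) + a) ^ (-k))) := by
    rw [Finset.sum_range_succ']
    have h0 : (stirling1 (n+1) 0 : ℂ) = 0 := by norm_num [stirling1]
    rw [h0]
    simp only [mul_zero, zero_mul, add_zero]
    apply Finset.sum_congr rfl
    intro m _
    have : (stirling1 (n+1) (m+1) : ℂ) = (stirling1 n m : ℂ) + n * stirling1 n (m+1) := by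
      show ((stirling1 n m + n * stirling1 n (m+1) : ℕ) : ℂ) = _
      push_cast; ring
    rw [this]; ring
  have expand : ∑ m ∈ Finset.range (n + 2), (-1:ℂ)^m * (stirling1 n m : ℂ) * (α * m + a) ^ (-k)
      = ∑ m ∈ Finset.range (n+1), (-1:ℂ)^(m+1) * (stirling1 n (m+1):ℂ) * (α * (m+1 : ℕ) + a) ^ (-k)
        + (stirling1 n 0 : ℂ) * (α * (0:ℕ) + a) ^ (-k) := by
    rw [Finset.sum_range_succ'
      (fun m => (-1:ℂ)^m * (stirling1 n m : ℂ) * (α * m + a) ^ (-k)) (n+1)]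
    simp only [pow_zero, one_mul]
  have hshift : ∑ m ∈ Finset.range (n + 1),
        (-1:ℂ)^(m+1) * (stirling1 n (m+1) : ℂ) * (α * (m+1 : ℕ) + a) ^ (-k)
      = ∑ m ∈ Finset.range (n + 1), (-1:ℂ)^m * (stirling1 n m : ℂ) * (α * m + a) ^ (-k)
        - (stirling1 n 0 : ℂ) * (α * (0:ℕ) + a) ^ (-k) := by
    rw [eq_sub_iff_add_eq, ← expand, Finset.sum_range_succ,
      stirling1_eq_zero (Nat.lt_succ_self n)]
    simp
  have hre : (-1:ℂ)^(n+1) *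
      (∑ m ∈ Finset.range (n + 1),
        (-1:ℂ)^(m+1) * (stirling1 n m : ℂ) * (α * (m+1 : ℕ) + a) ^ (-k))
      = ∑ j ∈ Finset.range (n + 1),
          (-1:ℂ)^(n-j) * (stirling1 n j : ℂ) * (α * (j + 1) + a) ^ (-k) := by
    rw [Finset.mul_sum]
    apply Finset.sum_congr rfl
    intro j hj
    have hjn : j ≤ n := Nat.lt_succ_iff.mp (Finset.mem_range.mp hj)
    have hs : (-1:ℂ)^(n-j) = (-1:ℂ)^(n+1) * (-1:ℂ)^(j+1) := by
      rw [← pow_add]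
      have h' : n + 1 + (j + 1) = (n - j) + 2*(j+1) := by omega
      rw [h', pow_add]
      simp [pow_mul]
    rw [hs]
    push_cast
    ring
  have hsign : (-1:ℂ)^(n+1) + (-1:ℂ)^n = 0 := by rw [pow_succ]; ring
  have hz0 := n_mul_stirling1_zero n
  rw [hsum, Finset.sum_add_distrib, ← Finset.mul_sum, hshift]
  linear_combination hre - ((-1:ℂ)^(n+1) * (α * ((0:ℕ):ℂ) + a) ^ (-k)) * hz0
    + ((n:ℂ) * ∑ m ∈ Finset.range (n + 1),
        (-1:ℂ)^m * (stirling1 n m : ℂ) * (α * m + a) ^ (-k)) * hsign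

theorem stmt10 (α a : ℂ) (hα : α ≠ 0) (ha : ∀ m : ℕ, α * m + a ≠ 0) (k : ℤ) :
    (1 + PowerSeries.X) *
        (PowerSeries.mk fun n => polyCauchy1 k α a n / (n.factorial : ℂ)).derivativeFun =
      PowerSeries.mk fun n =>
        (∑ j ∈ Finset.range (n + 1),
          (-1 : ℂ) ^ (n - j) * (stirling1 n j : ℂ) * (α * (j + 1) + a) ^ (-k)) /
          (n.factorial : ℂ) := by
  ext n
  rw [show ∀ f : PowerSeries ℂ, f.derivativeFun = PowerSeries.derivative ℂ f from fun _ => rfl]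
  rw [add_mul, one_mul, map_add, coeff_mk, coeff_derivativeFun, coeff_mk]
  cases n with
  | zero =>
    rw [coeff_zero_X_mul]
    have h := key k α a 0
    simp only [Nat.cast_zero, zero_mul, add_zero] at h
    simp [h, Nat.factorial]
  | succ n =>
    rw [coeff_succ_X_mul, coeff_derivativeFun, coeff_mk]
    have h := key k α a (n+1)
    have hf1 : ((n+1).factorial : ℂ) ≠ 0 := Nat.cast_ne_zero.mpr (Nat.factorial_ne_zero _)
    have hfac : ((n+2).factorial : ℂ) = ((n:ℂ)+2) * ((n+1).factorial : ℂ) := by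
      rw [Nat.factorial_succ (n+1)]; push_cast; ring
    rw [← h, show n+1+1 = n+2 from rfl, hfac]
    have h2 : ((n:ℂ)+2) ≠ 0 := by
      have h3 : ((n+2:ℕ):ℂ) ≠ 0 := Nat.cast_ne_zero.mpr (by omega)
      push_cast at h3; exact h3
    field_simp
    push_cast
    ring
end

section
/- Let H ∈ ℂ⟦X⟧ be the exponential generating function H = ∑_{n≥0} B_n^{(k)}(α,a) X^n/n! of the two-parameter Hurwitz-Lerch type poly-Bernoulli numbers. Then, for every k ∈ ℤ, the formal derivative of H satisfies exp(X) · H′ = ∑_{n≥0} E_n^{(k)}(α,a) X^n/n!, where E_n^{(k)}(α,a) = ∑_{m=1}^{n+1} (-1)^{n+m-1} · m! · {n, m-1} · (αm + a)^{-k}. (Equivalently, H′ = e^{-X} · ∑_{n≥0} E_n^{(k)}(α,a) X^n/n!.) -/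
open PowerSeries Finset

lemma stirling2_eq_zero_of_lt : ∀ {n m : ℕ}, n < m → stirling2 n m = 0
  | 0, _ + 1, _ => rfl
  | n + 1, m + 1, h => by
    have h1 : n < m := Nat.lt_of_succ_lt_succ h
    simp [stirling2, stirling2_eq_zero_of_lt h1,
      stirling2_eq_zero_of_lt (Nat.lt_succ_of_lt h1)]

lemma stirling2_zero_right : ∀ n, stirling2 n 0 = if n = 0 then 1 else 0
  | 0 => rfl
  | _ + 1 => by simp [stirling2]

lemma key_s12 (n : ℕ) : ∀ m : ℕ,
    ∑ j ∈ range (n + 1), (-1 : ℂ) ^ j * (n.choose j : ℂ) * (stirling2 (j + 1) (m + 1) : ℂ)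
      = (-1 : ℂ) ^ n * (stirling2 n m : ℂ) := by
  induction n with
  | zero =>
    intro m
    cases m <;> simp [stirling2]
  | succ n ih =>
    intro m
    have hA : ∑ j ∈ range (n + 2), (-1 : ℂ) ^ j * (((n+1).choose j : ℕ) : ℂ) * (stirling2 (j + 1) (m + 1) : ℂ)
        = ∑ j ∈ range (n + 1), (-1 : ℂ) ^ j * (n.choose j : ℂ) * (stirling2 (j + 1) (m + 1) : ℂ)
          + ∑ i ∈ range (n + 1), (-1 : ℂ) ^ (i + 1) * (n.choose i : ℂ) * (stirling2 (i + 1 + 1) (m + 1) : ℂ) := by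
      have e1 : ∑ j ∈ range (n + 1), (-1 : ℂ) ^ j * (n.choose j : ℂ) * (stirling2 (j + 1) (m + 1) : ℂ)
          = ∑ j ∈ range (n + 2), (-1 : ℂ) ^ j * (n.choose j : ℂ) * (stirling2 (j + 1) (m + 1) : ℂ) := by
        rw [Finset.sum_range_succ (n := n + 1)]
        simp [Nat.choose_succ_self]
      rw [e1, Finset.sum_range_succ' _ (n + 1),
        Finset.sum_range_succ' (fun j => (-1 : ℂ) ^ j * (n.choose j : ℂ) * (stirling2 (j + 1) (m + 1) : ℂ)) (n + 1)]
      have e2 : ∀ kk ∈ range (n + 1),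
          (-1 : ℂ) ^ (kk + 1) * (((n+1).choose (kk+1) : ℕ) : ℂ) * (stirling2 (kk + 1 + 1) (m + 1) : ℂ)
            = (-1 : ℂ) ^ (kk + 1) * ((n.choose (kk+1) : ℕ) : ℂ) * (stirling2 (kk + 1 + 1) (m + 1) : ℂ)
              + (-1 : ℂ) ^ (kk + 1) * ((n.choose kk : ℕ) : ℂ) * (stirling2 (kk + 1 + 1) (m + 1) : ℂ) := by
        intro kk _
        rw [Nat.choose_succ_succ]
        push_cast
        ring
      rw [Finset.sum_congr rfl e2, Finset.sum_add_distrib]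
      simp only [Nat.choose_zero_right]
      ring
    rw [hA]
    have hB : ∀ i, (stirling2 (i + 1 + 1) (m + 1) : ℂ)
        = (stirling2 (i + 1) m : ℂ) + ((m : ℂ) + 1) * (stirling2 (i + 1) (m + 1) : ℂ) := by
      intro i
      rw [stirling2]
      push_cast
      ring
    simp only [hB]
    rcases m with _ | m'
    · have h0 : ∀ i : ℕ, (stirling2 (i + 1) 0 : ℂ) = 0 := by
        intro i; simp [stirling2_zero_right]
      simp only [h0]
      rw [← Finset.sum_add_distrib, mul_zero]
      apply Finset.sum_eq_zero
      intro j hj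
      push_cast
      ring
    · have h2 : ∑ i ∈ range (n + 1), (-1 : ℂ) ^ (i + 1) * (n.choose i : ℂ) *
          ((stirling2 (i + 1) (m' + 1) : ℂ) + (((m' + 1 : ℕ) : ℂ) + 1) * (stirling2 (i + 1) (m' + 1 + 1) : ℂ))
          = -((-1 : ℂ) ^ n * (stirling2 n m' : ℂ))
            - (((m' : ℂ) + 2)) * ((-1 : ℂ) ^ n * (stirling2 n (m' + 1) : ℂ)) := by
        have step : ∑ i ∈ range (n + 1), (-1 : ℂ) ^ (i + 1) * (n.choose i : ℂ) *
            ((stirling2 (i + 1) (m' + 1) : ℂ) + (((m' + 1 : ℕ) : ℂ) + 1) * (stirling2 (i + 1) (m' + 1 + 1) : ℂ))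
            = (∑ i ∈ range (n + 1), -((-1 : ℂ) ^ i * (n.choose i : ℂ) * (stirling2 (i + 1) (m' + 1) : ℂ)))
              - ∑ i ∈ range (n + 1), ((m' : ℂ) + 2) * ((-1 : ℂ) ^ i * (n.choose i : ℂ) * (stirling2 (i + 1) (m' + 1 + 1) : ℂ)) := by
          rw [← Finset.sum_sub_distrib]
          apply Finset.sum_congr rfl
          intro i _
          push_cast
          ring
        rw [step, Finset.sum_neg_distrib, ← Finset.mul_sum, ih m', ih (m' + 1)]
      rw [h2, ih (m' + 1)]
      rw [show stirling2 (n + 1) (m' + 1) = stirling2 n m' + (m' + 1) * stirling2 n (m' + 1) from rfl]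
      push_cast
      ring

lemma main_id (k : ℤ) (α a : ℂ) (n : ℕ) :
    ∑ j ∈ range (n + 1), (n.choose j : ℂ) * polyBernoulli k α a (j + 1)
      = ∑ m ∈ Finset.Icc 1 (n + 1),
          (-1 : ℂ) ^ (n + m - 1) * (m.factorial : ℂ) * (stirling2 n (m - 1) : ℂ) *
            (α * m + a) ^ (-k) := by
  have hL1 : ∀ j ∈ range (n + 1), (n.choose j : ℂ) * polyBernoulli k α a (j + 1)
      = ∑ m ∈ range (n + 2), (n.choose j : ℂ) * ((-1 : ℂ) ^ (j + 1) *
          ((-1 : ℂ) ^ m * (m.factorial : ℂ) * (stirling2 (j + 1) m : ℂ) * (α * m + a) ^ (-k))) := by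
    intro j hj
    rw [polyBernoulli]
    have hsub : range (j + 1 + 1) ⊆ range (n + 2) := by
      apply Finset.range_subset_range.mpr
      simp only [Finset.mem_range] at hj
      omega
    rw [Finset.sum_subset hsub]
    · rw [Finset.mul_sum, Finset.mul_sum]
    · intro m _ hm
      simp only [Finset.mem_range, not_lt] at hm
      rw [stirling2_eq_zero_of_lt (by omega : j + 1 < m)]
      simp
  rw [Finset.sum_congr rfl hL1, Finset.sum_comm]
  rw [Finset.sum_range_succ' _ (n + 1)]
  have hzero : ∑ j ∈ range (n + 1), (n.choose j : ℂ) * ((-1 : ℂ) ^ (j + 1) *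
      ((-1 : ℂ) ^ 0 * ((0 : ℕ).factorial : ℂ) * (stirling2 (j + 1) 0 : ℂ) * (α * (0:ℕ) + a) ^ (-k))) = 0 := by
    apply Finset.sum_eq_zero
    intro j _
    rw [show stirling2 (j + 1) 0 = 0 from rfl]
    push_cast
    ring
  rw [hzero, add_zero]
  rw [← Finset.Ico_add_one_right_eq_Icc, Finset.sum_Ico_eq_sum_range]
  simp only [Nat.succ_sub_one, Nat.add_sub_cancel]
  apply Finset.sum_congr rfl
  intro i _
  rw [Nat.add_comm 1 i]
  have hfac : ∑ j ∈ range (n + 1), (n.choose j : ℂ) * ((-1 : ℂ) ^ (j + 1) *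
      ((-1 : ℂ) ^ (i + 1) * ((i + 1).factorial : ℂ) * (stirling2 (j + 1) (i + 1) : ℂ) * (α * (i + 1 : ℕ) + a) ^ (-k)))
      = ((-1 : ℂ) ^ i * ((i + 1).factorial : ℂ) * (α * (i + 1 : ℕ) + a) ^ (-k)) *
          ∑ j ∈ range (n + 1), (-1 : ℂ) ^ j * (n.choose j : ℂ) * (stirling2 (j + 1) (i + 1) : ℂ) := by
    rw [Finset.mul_sum]
    apply Finset.sum_congr rfl
    intro j _
    ring
  rw [hfac, key_s12 n i]
  have : n + (i + 1) - 1 = n + i := by omega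
  rw [this, show (i + 1) - 1 = i from by omega, pow_add]
  ring

theorem stmt12 (α a : ℂ) (hα : α ≠ 0) (ha : ∀ m : ℕ, α * m + a ≠ 0) (k : ℤ) :
    PowerSeries.exp ℂ *
        (PowerSeries.mk fun n => polyBernoulli k α a n / (n.factorial : ℂ)).derivativeFun =
      PowerSeries.mk fun n =>
        (∑ m ∈ Finset.Icc 1 (n + 1),
          (-1 : ℂ) ^ (n + m - 1) * (m.factorial : ℂ) * (stirling2 n (m - 1) : ℂ) *
            (α * m + a) ^ (-k)) / (n.factorial : ℂ) := by
  ext n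
  rw [PowerSeries.coeff_mul, Finset.Nat.sum_antidiagonal_eq_sum_range_succ_mk,
    PowerSeries.coeff_mk, ← main_id k α a n, ← Finset.sum_range_reflect, Finset.sum_div]
  apply Finset.sum_congr rfl
  intro j hj
  simp only [Finset.mem_range] at hj
  have hjn : j ≤ n := by omega
  have h1 : n + 1 - 1 - j = n - j := by omega
  have h2 : n - (n - j) = j := by omega
  rw [h1, h2, show ∀ f : PowerSeries ℂ, f.derivativeFun = d⁄dX ℂ f from fun _ => rfl,
    PowerSeries.coeff_derivative, PowerSeries.coeff_mk, PowerSeries.coeff_exp]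
  have hc : ((n.choose j : ℂ) * (j.factorial : ℂ) * ((n - j).factorial : ℂ)) = (n.factorial : ℂ) := by
    exact_mod_cast congrArg (Nat.cast : ℕ → ℂ) (Nat.choose_mul_factorial_mul_factorial hjn)
  have hne1 : ((j.factorial : ℂ)) ≠ 0 := Nat.cast_ne_zero.mpr (Nat.factorial_ne_zero j)
  have hne2 : (((n - j).factorial : ℂ)) ≠ 0 := by
    exact_mod_cast Nat.cast_ne_zero.mpr (Nat.factorial_ne_zero (n - j))
  have hne3 : ((j : ℂ) + 1) ≠ 0 := Nat.cast_add_one_ne_zero j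
  rw [Nat.factorial_succ, ← hc]
  have hne4 : ((n.choose j : ℂ)) ≠ 0 := by
    exact Nat.cast_ne_zero.mpr (Nat.choose_pos hjn).ne'
  push_cast
  field_simp
end
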